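/- Let U be a finite ground set of size n covered by a collection 𝒮 of subsets. Let g be the entropy of the greedy solution (iteratively assigning uncovered elements to a set covering the maximum number of uncovered elements), and let OPT be the minimum entropy over all assignments φ : U → 𝒮 with x ∈ φ(x). Then g ≤ OPT + log₂ e. -/

import Mathlib

open scoped BigOperators

/-- Charging lemma: the product over `A` of the number of elements of `A` whose
`ι`-value is at least that of the given element is at least `|A|!`. -/
lemma rank_prod_factorial {α β : Type*} [DecidableEq α] [LinearOrder β] (ι : α → β)
    (A : Finset α) :
    Nat.factorial A.card ≤ ∏ v ∈ A, (A.filter fun w => ι v ≤ ι w).card := by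
  induction A using Finset.strongInduction with
  | _ A ih =>
    rcases A.eq_empty_or_nonempty with rfl | hA
    · simp
    obtain ⟨v0, hv0, hmin⟩ := A.exists_min_image ι hA
    have h1 : A.filter (fun w => ι v0 ≤ ι w) = A :=
      Finset.filter_true_of_mem (fun w hw => hmin w hw)
    have hsub : A.erase v0 ⊂ A := Finset.erase_ssubset hv0
    have h2 : ∀ v ∈ A.erase v0,
        ((A.erase v0).filter fun w => ι v ≤ ι w).card ≤ (A.filter fun w => ι v ≤ ι w).card :=
      fun v _ => Finset.card_le_card
        (Finset.filter_subset_filter _ (Finset.erase_subset _ _))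
    have hcard : A.card = (A.erase v0).card + 1 := by
      rw [Finset.card_erase_of_mem hv0]
      exact (Nat.succ_pred_eq_of_pos (Finset.card_pos.mpr hA)).symm
    calc Nat.factorial A.card = A.card * Nat.factorial (A.erase v0).card := by
          rw [hcard, Nat.factorial_succ]
      _ ≤ A.card * ∏ v ∈ A.erase v0, ((A.erase v0).filter fun w => ι v ≤ ι w).card :=
          Nat.mul_le_mul_left _ (ih _ hsub)
      _ ≤ A.card * ∏ v ∈ A.erase v0, (A.filter fun w => ι v ≤ ι w).card :=
          Nat.mul_le_mul_left _ (Finset.prod_le_prod' h2)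
      _ = ∏ v ∈ A, (A.filter fun w => ι v ≤ ι w).card := by
          conv_rhs => rw [← Finset.mul_prod_erase A _ hv0, h1]

/-- The greedy algorithm for minimum entropy set cover has entropy at most
`OPT + log₂ e`. The sets `S i` are the sets of newly covered elements in the
successive greedy iterations, and `φ` ranges over all feasible assignments. -/
theorem stmt_5 {V : Type*} [Fintype V] [DecidableEq V] [Nonempty V]
    (n : ℕ) (hn : n = Fintype.card V)
    (𝒮 : Finset (Finset V)) (hcover : ∀ v : V, ∃ T ∈ 𝒮, v ∈ T)
    (l : ℕ) (S : Fin l → Finset V)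
    (hS : ∀ i, ∃ T ∈ 𝒮, S i ⊆ T)
    (hdisj : ∀ i j, i ≠ j → Disjoint (S i) (S j))
    (hpart : ∀ v : V, ∃ i, v ∈ S i)
    (hgreedy : ∀ i : Fin l, ∀ T ∈ 𝒮,
      (T \ (Finset.Iio i).biUnion (fun j => S j)).card ≤ (S i).card)
    (g : ℝ)
    (hg : g = -∑ i : Fin l, (((S i).card : ℝ) / n) * Real.logb 2 (((S i).card : ℝ) / n))
    (φ : V → Finset V) (hφ : ∀ v, φ v ∈ 𝒮 ∧ v ∈ φ v) :
    g ≤ (-∑ T ∈ 𝒮, (((Finset.univ.filter (fun v => φ v = T)).card : ℝ) / n) *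
          Real.logb 2 (((Finset.univ.filter (fun v => φ v = T)).card : ℝ) / n))
        + Real.logb 2 (Real.exp 1) := by
  classical
  -- notation
  set a : Fin l → ℕ := fun i => (S i).card with ha
  set b : Finset V → ℕ := fun T => (Finset.univ.filter (fun v => φ v = T)).card with hb
  obtain ⟨idx, hidx⟩ := Classical.axiomOfChoice hpart
  have hidx_unique : ∀ v i, v ∈ S i → i = idx v := by
    intro v i hv
    by_contra h
    exact Finset.disjoint_left.mp (hdisj i (idx v) h) hv (hidx v)
  have hfib : ∀ i, Finset.univ.filter (fun v => idx v = i) = S i := by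
    intro i
    ext v
    simp only [Finset.mem_filter, Finset.mem_univ, true_and]
    constructor
    · rintro rfl; exact hidx v
    · intro hv; exact (hidx_unique v i hv).symm
  have hn0 : 0 < n := hn ▸ Fintype.card_pos
  have hnR : (0:ℝ) < n := by exact_mod_cast hn0
  -- sums of sizes
  have hsuma : ∑ i : Fin l, a i = n := by
    rw [hn, ← Finset.card_univ,
      Finset.card_eq_sum_card_fiberwise (f := idx) (fun v _ => Finset.mem_univ (idx v))]
    exact Finset.sum_congr rfl fun i _ => by rw [hfib i]
  have hsumb : ∑ T ∈ 𝒮, b T = n := by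
    rw [hn, ← Finset.card_univ,
      Finset.card_eq_sum_card_fiberwise (f := φ) (fun v _ => (hφ v).1)]
  -- key combinatorial inequality : ∏ b T ! ≤ ∏ a i ^ a i
  have hperT : ∀ T ∈ 𝒮, Nat.factorial (b T) ≤
      ∏ v ∈ Finset.univ.filter (fun v => φ v = T), a (idx v) := by
    intro T hT
    refine le_trans (rank_prod_factorial idx _) (Finset.prod_le_prod' ?_)
    intro v hv
    refine le_trans (Finset.card_le_card ?_) (hgreedy (idx v) T hT)
    intro w hw
    simp only [Finset.mem_filter, Finset.mem_univ, true_and] at hw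
    obtain ⟨hwT, hle⟩ := hw
    rw [Finset.mem_sdiff]
    constructor
    · rw [← hwT]; exact (hφ w).2
    · intro hmem
      obtain ⟨j, hj, hwj⟩ := Finset.mem_biUnion.mp hmem
      rw [Finset.mem_Iio] at hj
      rw [hidx_unique w j hwj] at hj
      exact absurd hle (not_le.mpr hj)
  have key : ∏ T ∈ 𝒮, Nat.factorial (b T) ≤ ∏ i : Fin l, a i ^ a i := by
    calc ∏ T ∈ 𝒮, Nat.factorial (b T)
        ≤ ∏ T ∈ 𝒮, ∏ v ∈ Finset.univ.filter (fun v => φ v = T), a (idx v) :=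
          Finset.prod_le_prod' hperT
      _ = ∏ v : V, a (idx v) :=
          Finset.prod_fiberwise_of_maps_to (fun v _ => (hφ v).1) _
      _ = ∏ i : Fin l, ∏ v ∈ Finset.univ.filter (fun v => idx v = i), a (idx v) :=
          (Finset.prod_fiberwise_of_maps_to (fun v _ => Finset.mem_univ (idx v)) _).symm
      _ = ∏ i : Fin l, a i ^ a i := by
          refine Finset.prod_congr rfl fun i _ => ?_
          rw [Finset.prod_congr (hfib i) (fun v hv => by
            rw [← hidx_unique v i hv]), Finset.prod_const, ha]
  -- pass to reals / logs
  set A : ℝ := ∑ i : Fin l, (a i : ℝ) * Real.logb 2 (a i) with hA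
  set B : ℝ := ∑ T ∈ 𝒮, (b T : ℝ) * Real.logb 2 (b T) with hB
  have hlog_fac : ∀ m : ℕ,
      (m : ℝ) * Real.logb 2 m - (m : ℝ) * Real.logb 2 (Real.exp 1)
        ≤ Real.logb 2 (Nat.factorial m : ℝ) := by
    intro m
    have h1 : (m : ℝ) ^ m / (Nat.factorial m : ℝ) ≤ Real.exp m := Real.pow_div_factorial_le_exp (m:ℝ) (Nat.cast_nonneg m) m
    have hfacpos : (0:ℝ) < (Nat.factorial m : ℝ) := by exact_mod_cast m.factorial_pos
    have h2 : (m : ℝ) ^ m ≤ Real.exp m * (Nat.factorial m : ℝ) := by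
      rw [div_le_iff₀ hfacpos] at h1; linarith
    have h3 : Real.logb 2 ((m : ℝ) ^ m) ≤ Real.logb 2 (Real.exp m * (Nat.factorial m : ℝ)) := by
      rcases Nat.eq_zero_or_pos m with rfl | hm
      · simp
      · exact Real.logb_le_logb_of_le one_lt_two (by positivity) h2
    rw [Real.logb_pow, Real.logb_mul (Real.exp_ne_zero _) (ne_of_gt hfacpos)] at h3
    have h4 : Real.logb 2 (Real.exp (m : ℝ)) = (m : ℝ) * Real.logb 2 (Real.exp 1) := by
      simp only [Real.logb, Real.log_exp]
      ring
    rw [h4] at h3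
    linarith
  have hlogA : Real.logb 2 ((∏ i : Fin l, a i ^ a i : ℕ) : ℝ) = A := by
    push_cast
    rw [Real.logb_prod _ _ (fun i _ => by
      rcases Nat.eq_zero_or_pos (a i) with h | h
      · simp [h]
      · positivity)]
    exact Finset.sum_congr rfl fun i _ => by rw [Real.logb_pow]
  have hlogB : Real.logb 2 ((∏ T ∈ 𝒮, Nat.factorial (b T) : ℕ) : ℝ) = ∑ T ∈ 𝒮, Real.logb 2 (Nat.factorial (b T) : ℝ) := by
    push_cast
    exact Real.logb_prod _ _ (fun T _ => by
      exact_mod_cast (b T).factorial_pos.ne')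
  have hmain : B ≤ A + (n : ℝ) * Real.logb 2 (Real.exp 1) := by
    have h5 : ∑ T ∈ 𝒮, Real.logb 2 (Nat.factorial (b T) : ℝ) ≤ A := by
      rw [← hlogB, ← hlogA]
      refine Real.logb_le_logb_of_le one_lt_two ?_ (by exact_mod_cast key)
      have : 0 < ∏ T ∈ 𝒮, Nat.factorial (b T) := Finset.prod_pos fun T _ => (b T).factorial_pos
      exact_mod_cast this
    have h6 : B - (n : ℝ) * Real.logb 2 (Real.exp 1) ≤ ∑ T ∈ 𝒮, Real.logb 2 (Nat.factorial (b T) : ℝ) := by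
      have : B - (n : ℝ) * Real.logb 2 (Real.exp 1)
          = ∑ T ∈ 𝒮, ((b T : ℝ) * Real.logb 2 (b T)
              - (b T : ℝ) * Real.logb 2 (Real.exp 1)) := by
        rw [Finset.sum_sub_distrib, ← Finset.sum_mul]
        have : ∑ T ∈ 𝒮, (b T : ℝ) = (n : ℝ) := by exact_mod_cast congrArg Nat.cast hsumb
        rw [this, hB]
      rw [this]
      exact Finset.sum_le_sum fun T _ => hlog_fac (b T)
    linarith
  -- rewrite g and the OPT entropy
  have hterm : ∀ m : ℕ, ((m : ℝ) / n) * Real.logb 2 ((m : ℝ) / n)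
      = ((m : ℝ) * Real.logb 2 m) / n - ((m : ℝ) / n) * Real.logb 2 n := by
    intro m
    rcases Nat.eq_zero_or_pos m with rfl | hm
    · simp
    · rw [Real.logb_div (by exact_mod_cast hm.ne') (ne_of_gt hnR)]
      ring
  have hgval : g = -(A / n) + Real.logb 2 n := by
    rw [hg]
    rw [Finset.sum_congr rfl (fun i _ => hterm (a i))]
    rw [Finset.sum_sub_distrib, ← Finset.sum_div, ← Finset.sum_mul, ← Finset.sum_div]
    have : ∑ i : Fin l, (a i : ℝ) = (n : ℝ) := by exact_mod_cast congrArg Nat.cast hsuma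
    rw [this, hA]
    field_simp
    ring
  have hoptval : (-∑ T ∈ 𝒮, ((b T : ℝ) / n) * Real.logb 2 ((b T : ℝ) / n))
      = -(B / n) + Real.logb 2 n := by
    rw [Finset.sum_congr rfl (fun T _ => hterm (b T))]
    rw [Finset.sum_sub_distrib, ← Finset.sum_div, ← Finset.sum_mul, ← Finset.sum_div]
    have : ∑ T ∈ 𝒮, (b T : ℝ) = (n : ℝ) := by exact_mod_cast congrArg Nat.cast hsumb
    rw [this, hB]
    field_simp
    ring
  rw [hgval]
  have hgoal : (-∑ T ∈ 𝒮, (((Finset.univ.filter (fun v => φ v = T)).card : ℝ) / n) *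
      Real.logb 2 (((Finset.univ.filter (fun v => φ v = T)).card : ℝ) / n))
      = -(B / n) + Real.logb 2 n := hoptval
  rw [hgoal]
  have hdiv : B / n ≤ A / n + Real.logb 2 (Real.exp 1) := by
    calc B / n ≤ (A + n * Real.logb 2 (Real.exp 1)) / n := by gcongr
      _ = A / n + Real.logb 2 (Real.exp 1) := by field_simp
  linarith
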